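/- arXiv:2102.10149 — 4 statements merged into one kernel-verified Lean document; each statement's English description precedes it below -/
import Mathlib

section
/- Suppose L has a unique maximal element m and every proper element of L lies below m (L is quasi-local). Let p ∈ L be a proper element such that p² = m² and m² ≤ p ≤ m, and let b ∈ L. Then either b is φ₂-δ₁-primary to p or b ≤ p. -/
/-- A multiplicative lattice: a complete lattice with a commutative, associative
multiplication that distributes over arbitrary joins and whose greatest element `1`
is a multiplicative identity.  We also bundle the standing assumptions of the paper:
`L` is compactly generated, `1` is compact, and products of compact elements are
compact. -/
class MultiplicativeLattice (L : Type*) extends CompleteLattice L, CommMonoid L where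
  mul_sSup : ∀ (a : L) (s : Set L), a * sSup s = ⨆ x ∈ s, a * x
  one_eq_top : (1 : L) = ⊤
  compactly_generated : ∀ x : L, ∃ s : Set L,
    (∀ y ∈ s, IsCompactElement y) ∧ sSup s = x
  compact_one : IsCompactElement (1 : L)
  compact_mul : ∀ a b : L, IsCompactElement a →
    IsCompactElement b → IsCompactElement (a * b)

variable {L : Type*}

/-- An expansion function on `L`. -/
def IsExpansion [CompleteLattice L] (δ : L → L) : Prop :=
  (∀ a, a ≤ δ a) ∧ ∀ a b : L, a ≤ b → δ a ≤ δ b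

/-- A reduction function on `L`. -/
def IsReduction [CompleteLattice L] (φ : L → L) : Prop :=
  ∀ a, φ a ≤ a

/-- `b` is `φ`-`δ`-primary to `p`. -/
def PhiDeltaPrimaryTo [MultiplicativeLattice L] (φ δ : L → L) (b p : L) : Prop :=
  ∀ x : L, x * b ≤ p → ¬ x * b ≤ φ p → x ≤ δ p

/-- `b` is `δ`-primary to `p`. -/
def DeltaPrimaryTo [MultiplicativeLattice L] (δ : L → L) (b p : L) : Prop :=
  ∀ x : L, x * b ≤ p → x ≤ δ p

/-- `b` is `φ`-prime to `p`. -/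
def PhiPrimeTo [MultiplicativeLattice L] (φ : L → L) (b p : L) : Prop :=
  ∀ x : L, x * b ≤ p → ¬ x * b ≤ φ p → x ≤ p

/-- The radical `√q`: the join of all compact elements some positive power of which
lies below `q`.  This is the expansion function `δ₁`. -/
def mlRadical [MultiplicativeLattice L] (q : L) : L :=
  sSup {x : L | IsCompactElement x ∧ ∃ n : ℕ, 0 < n ∧ x ^ n ≤ q}

/-- The function `φ_ω(q) = ⋀_{n ≥ 1} qⁿ`. -/
def phiOmega [MultiplicativeLattice L] (q : L) : L := ⨅ n : ℕ, q ^ (n + 1)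

/-- The mlResidual `(a : c)`, the join of all `x` with `x * c ≤ a`. -/
def mlResidual [MultiplicativeLattice L] (a c : L) : L := sSup {x : L | x * c ≤ a}

private lemma ml_mul_le_mul_left {L : Type*} [MultiplicativeLattice L] {a b : L} (c : L)
    (h : a ≤ b) : c * a ≤ c * b := by
  have hs : c * sSup {a, b} = (c * a) ⊔ (c * b) := by
    rw [MultiplicativeLattice.mul_sSup]
    exact iSup_pair
  have : sSup ({a, b} : Set L) = b := by rw [sSup_pair, sup_eq_right.mpr h]
  rw [this] at hs
  rw [hs]; exact le_sup_left

theorem phiTwoDeltaOnePrimary_or_le_of_quasiLocal [MultiplicativeLattice L]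
    (m : L) (hm : m < 1) (hmax : ∀ x : L, x < 1 → x ≤ m)
    (p : L) (hp : p < 1) (hpm : p ^ 2 = m ^ 2) (hmp : m ^ 2 ≤ p) (hpm' : p ≤ m)
    (b : L) :
    PhiDeltaPrimaryTo (fun q => q ^ 2) mlRadical b p ∨ b ≤ p := by
  by_cases hb : b ≤ p
  · exact Or.inr hb
  · left
    intro x hxb hxb2
    -- x ≠ 1, so x ≤ m
    have hx1 : x ≤ m := by
      rcases lt_or_eq_of_le (le_of_le_of_eq (le_top : x ≤ ⊤) MultiplicativeLattice.one_eq_top.symm) with h | h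
      · exact hmax x h
      · exfalso
        apply hb
        calc b = x * b := by rw [h, one_mul]
        _ ≤ p := hxb
    -- m ≤ mlRadical p
    have hmrad : m ≤ mlRadical p := by
      obtain ⟨s, hsc, hss⟩ := MultiplicativeLattice.compactly_generated m
      rw [← hss]
      apply sSup_le
      intro c hc
      apply le_sSup
      refine ⟨hsc c hc, 2, two_pos, ?_⟩
      have hcm : c ≤ m := hss ▸ le_sSup hc
      have : c * c ≤ m * m := le_trans (ml_mul_le_mul_left c hcm)
        (by rw [mul_comm c m, mul_comm m m]; exact ml_mul_le_mul_left m hcm)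
      calc c ^ 2 = c * c := sq c
      _ ≤ m * m := this
      _ = m ^ 2 := (sq m).symm
      _ ≤ p := hmp
    exact le_trans hx1 hmrad
end

section
/- Let δ be an expansion function on L, let p ∈ L be a proper element and b ∈ L. Then b is φ_ω-δ-primary to p if and only if b is φ_n-δ-primary to p for every integer n ≥ 2. -/
variable {L : Type*}

theorem phiOmega_deltaPrimary_iff_forall_phiN [MultiplicativeLattice L]
    (δ : L → L) (hδ : IsExpansion δ) (p : L) (hp : p < 1) (b : L) :
    PhiDeltaPrimaryTo phiOmega δ b p ↔
      ∀ n : ℕ, 2 ≤ n → PhiDeltaPrimaryTo (fun q => q ^ n) δ b p := by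
  constructor
  · intro h n hn x hxb hnot
    refine h x hxb (fun hle => hnot ?_)
    calc x * b ≤ phiOmega p := hle
      _ ≤ p ^ n := by
        have : phiOmega p ≤ p ^ ((n - 1) + 1) := iInf_le _ (n - 1)
        rwa [Nat.sub_add_cancel (by omega)] at this
  · intro h x hxb hnot
    simp only [phiOmega, le_iInf_iff, not_forall] at hnot
    obtain ⟨k, hk⟩ := hnot
    rcases Nat.eq_zero_or_pos k with rfl | hkpos
    · simp only [zero_add, pow_one] at hk; exact absurd hxb hk
    · exact h (k + 1) (by omega) x hxb hk
end

section
/- Let δ be an expansion function on L. Let p ∈ L be a nonzero proper element that is non-nilpotent (pⁿ ≠ 0 for every positive integer n) and satisfies the restricted cancellation law: for all a, c ∈ L, p·a = p·c ≠ 0 implies a = c. Let b ∈ L with p < b. Then b is δ-primary to p if and only if there exists a reduction function φ on L with φ(a) ≤ a² for all a ∈ L such that b is φ-δ-primary to p; in particular, if b is φ₂-δ-primary to p then b is δ-primary to p. -/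
variable {L : Type*}

lemma ml_mul_le_mul [MultiplicativeLattice L] (c : L) {a b : L} (h : a ≤ b) :
    c * a ≤ c * b := by
  have hb : b = sSup {a, b} := by rw [sSup_pair, sup_eq_right.2 h]
  rw [hb, MultiplicativeLattice.mul_sSup]
  exact le_biSup (fun x => c * x) (Set.mem_insert a {b})

lemma ml_mul_sup [MultiplicativeLattice L] (c a b : L) :
    c * (a ⊔ b) = c * a ⊔ c * b := by
  rw [← sSup_pair, MultiplicativeLattice.mul_sSup]
  exact iSup_pair

lemma ml_key [MultiplicativeLattice L]
    (δ : L → L)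
    (p : L)
    (hnonnil : ∀ n : ℕ, 0 < n → p ^ n ≠ ⊥)
    (hcanc : ∀ a c : L, p * a = p * c → p * a ≠ ⊥ → a = c)
    (b : L) (hpb : p < b)
    (φ : L → L) (hφsq : ∀ a : L, φ a ≤ a ^ 2)
    (hprim : PhiDeltaPrimaryTo φ δ b p) : DeltaPrimaryTo δ b p := by
  have hpbp : p * b ≤ p := by
    have h1 : p * b ≤ p * 1 := by
      refine ml_mul_le_mul p ?_
      rw [MultiplicativeLattice.one_eq_top]; exact le_top
    simpa using h1
  have hppb : p * p ≤ p * b := ml_mul_le_mul p hpb.le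
  have hnot : ¬ p * b ≤ p ^ 2 := by
    intro hle
    have heq : p * b = p * p := le_antisymm (by rwa [pow_two] at hle) hppb
    have hne : p * b ≠ ⊥ := by
      rw [heq, ← pow_two]; exact hnonnil 2 (by norm_num)
    exact absurd (hcanc b p heq hne).symm (ne_of_lt hpb)
  intro x hxb
  by_cases h : x * b ≤ φ p
  · have hxb2 : x * b ≤ p ^ 2 := h.trans (hφsq p)
    have h1 : (x ⊔ p) * b ≤ p := by
      rw [mul_comm, ml_mul_sup, mul_comm b x, mul_comm b p]
      exact sup_le hxb hpbp
    have h2 : ¬ (x ⊔ p) * b ≤ φ p := by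
      intro hle
      apply hnot
      calc p * b = b * p := mul_comm _ _
        _ ≤ b * (x ⊔ p) := ml_mul_le_mul b le_sup_right
        _ = (x ⊔ p) * b := mul_comm _ _
        _ ≤ φ p := hle
        _ ≤ p ^ 2 := hφsq p
    exact le_sup_left.trans (hprim _ h1 h2)
  · exact hprim x hxb h

theorem deltaPrimary_iff_exists_phi_le_sq [MultiplicativeLattice L]
    (δ : L → L) (hδ : IsExpansion δ)
    (p : L) (hp0 : p ≠ ⊥) (hp : p < 1)
    (hnonnil : ∀ n : ℕ, 0 < n → p ^ n ≠ ⊥)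
    (hcanc : ∀ a c : L, p * a = p * c → p * a ≠ ⊥ → a = c)
    (b : L) (hpb : p < b) :
    (DeltaPrimaryTo δ b p ↔
      ∃ φ : L → L, IsReduction φ ∧ (∀ a : L, φ a ≤ a ^ 2) ∧
        PhiDeltaPrimaryTo φ δ b p) ∧
    (PhiDeltaPrimaryTo (fun q => q ^ 2) δ b p → DeltaPrimaryTo δ b p) := by
  constructor
  · constructor
    · intro hd
      exact ⟨fun _ => ⊥, fun a => bot_le, fun a => bot_le,
        fun x hx _ => hd x hx⟩
    · rintro ⟨φ, -, hφsq, hprim⟩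
      exact ml_key δ p hnonnil hcanc b hpb φ hφsq hprim
  · intro hprim
    exact ml_key δ p hnonnil hcanc b hpb _ (fun a => le_rfl) hprim
end

section
/- Let δ be an expansion function on L, let p ∈ L be a proper element and b ∈ L, and let n and k be integers with 2 ≤ k ≤ n. Suppose b is k-potent δ-primary to p. Then b is φ_n-δ-primary to p if and only if b is δ-primary to p. -/
variable {L : Type*}

private lemma ml_mul_le_left [MultiplicativeLattice L] (a b : L) : a * b ≤ a := by
  have h : a * (1 : L) = ⨆ x ∈ (Set.univ : Set L), a * x := by
    rw [← MultiplicativeLattice.mul_sSup a Set.univ, sSup_univ,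
      ← MultiplicativeLattice.one_eq_top]
  calc a * b ≤ ⨆ x ∈ (Set.univ : Set L), a * x := le_biSup _ (Set.mem_univ b)
    _ = a * 1 := h.symm
    _ = a := mul_one a

private lemma ml_pow_le_pow [MultiplicativeLattice L] (p : L) {k n : ℕ} (h : k ≤ n) :
    p ^ n ≤ p ^ k := by
  obtain ⟨m, rfl⟩ := Nat.exists_eq_add_of_le h
  rw [pow_add]
  exact ml_mul_le_left _ _

theorem phiN_deltaPrimary_iff_deltaPrimary_of_kPotent [MultiplicativeLattice L]
    (δ : L → L) (hδ : IsExpansion δ) (p : L) (hp : p < 1) (b : L)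
    (n k : ℕ) (hk : 2 ≤ k) (hkn : k ≤ n)
    (hkpotent : ∀ x : L, x * b ≤ p ^ k → x ≤ δ p) :
    PhiDeltaPrimaryTo (fun q => q ^ n) δ b p ↔ DeltaPrimaryTo δ b p := by
  constructor
  · intro h x hxb
    by_cases hn : x * b ≤ p ^ n
    · exact hkpotent x (hn.trans (ml_pow_le_pow p hkn))
    · exact h x hxb hn
  · intro h x hxb _
    exact h x hxb
end
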